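/- If the Freyd functor F : 𝓒 ⥤ 𝓟𝓑 is faithful, then F reflects isomorphisms: a morphism f : X → Y in 𝓒 is an isomorphism if and only if F(f) : F(X) → F(Y) is an isomorphism of presheaves. -/

import Mathlib

open CategoryTheory Limits Pretriangulated Opposite

universe v u

/-- The category of additive presheaves (of abelian groups) on a preadditive category. -/
noncomputable abbrev AddPresheaf (D : Type u) [Category.{v} D] [Preadditive D] :=
  Dᵒᵖ ⥤+ AddCommGrpCat.{v}

section Presheaves

variable (B C : Type u) [Category.{v} B] [Category.{v} C] [Preadditive B] [Preadditive C]

/-- The restriction functor `U : 𝓟𝓒 ⥤ 𝓟𝓑` given by precomposition with `ιᵒᵖ`. -/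
noncomputable def restrictU (ι : B ⥤ C) [ι.Additive] :
    AddPresheaf C ⥤ AddPresheaf B where
  obj G := ⟨ι.op ⋙ G.1, letI : G.1.Additive := G.2; (inferInstance : (ι.op ⋙ G.1).Additive)⟩
  map α := ObjectProperty.homMk (Functor.whiskerLeft ι.op α.hom)

/-- The additive Yoneda embedding `Y : 𝓒 ⥤ 𝓟𝓒`, `Y(X) = 𝓒(−, X)`. -/
noncomputable def yonedaAdd : C ⥤ AddPresheaf C where
  obj X := ⟨preadditiveYoneda.obj X, (inferInstance : (preadditiveYoneda.obj X).Additive)⟩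
  map f := ObjectProperty.homMk (preadditiveYoneda.map f)

/-- The Freyd functor `F = Y ⋙ U : 𝓒 ⥤ 𝓟𝓑`, `F(X) = 𝓒(ι(−), X)`. -/
noncomputable def freydF (ι : B ⥤ C) [ι.Additive] : C ⥤ AddPresheaf B :=
  yonedaAdd C ⋙ restrictU B C ι

end Presheaves

section Triangulated

variable (T : Type u) [Category.{v} T] [Preadditive T] [HasZeroObject T] [HasShift T ℤ]
  [∀ n : ℤ, (shiftFunctor T n).Additive] [Pretriangulated T] [IsTriangulated T]

/-- A class of objects of a (pre)triangulated category is *thick-closed* if it is closed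
under isomorphisms, shifts, retracts, and two-out-of-three for distinguished triangles. -/
def IsThickClosed (P : Set T) : Prop :=
  (∀ X Y : T, (X ≅ Y) → X ∈ P → Y ∈ P) ∧
  (∀ (X : T) (n : ℤ), X ∈ P → X⟦n⟧ ∈ P) ∧
  (∀ (X Y : T) (i : X ⟶ Y) (r : Y ⟶ X), i ≫ r = 𝟙 X → Y ∈ P → X ∈ P) ∧
  (∀ Tr : Triangle T, Tr ∈ (distTriang T) →
    ((Tr.obj₁ ∈ P → Tr.obj₂ ∈ P → Tr.obj₃ ∈ P) ∧
     (Tr.obj₂ ∈ P → Tr.obj₃ ∈ P → Tr.obj₁ ∈ P) ∧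
     (Tr.obj₁ ∈ P → Tr.obj₃ ∈ P → Tr.obj₂ ∈ P)))

/-- The thick subcategory generated by a class of objects: the smallest thick-closed
class of objects containing it. -/
def thickClosure (S : Set T) : Set T :=
  ⋂₀ {P : Set T | S ⊆ P ∧ IsThickClosed T P}

lemma subset_thickClosure (S : Set T) : S ⊆ thickClosure T S :=
  fun _ hX => Set.mem_sInter.2 fun _ hP => hP.1 hX

lemma shift_mem_thickClosure {S : Set T} {X : T} (hX : X ∈ thickClosure T S) (n : ℤ) :
    X⟦n⟧ ∈ thickClosure T S :=
  Set.mem_sInter.2 fun P hP => hP.2.2.1 X n (Set.mem_sInter.1 hX P hP)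

/-- The full subcategory `𝓑`. -/
abbrev BSub (Bs : Set T) := ObjectProperty.FullSubcategory (· ∈ Bs)

/-- The full subcategory `𝓒`: the thick subcategory generated by `𝓑`. -/
abbrev CSub (Bs : Set T) := ObjectProperty.FullSubcategory (· ∈ thickClosure T Bs)

/-- The inclusion `ι : 𝓑 ⥤ 𝓒`. -/
noncomputable def inclBC (Bs : Set T) : BSub T Bs ⥤ CSub T Bs :=
  ObjectProperty.ιOfLE (fun _ hX => subset_thickClosure T Bs hX)

instance (Bs : Set T) : (inclBC T Bs).Additive := ⟨rfl⟩

/-- The Freyd functor `F : 𝓒 ⥤ 𝓟𝓑`. -/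
noncomputable def freydT (Bs : Set T) : CSub T Bs ⥤ AddPresheaf (BSub T Bs) :=
  freydF (BSub T Bs) (CSub T Bs) (inclBC T Bs)

end Triangulated


lemma thickClosure_isThickClosed
    (T : Type u) [Category.{v} T] [Preadditive T] [HasZeroObject T] [HasShift T ℤ]
    [∀ n : ℤ, (shiftFunctor T n).Additive] [Pretriangulated T] [IsTriangulated T]
    (S : Set T) : IsThickClosed T (thickClosure T S) := by
  refine ⟨fun X Y e hX => Set.mem_sInter.2 fun P hP => hP.2.1 X Y e (Set.mem_sInter.1 hX P hP),
    fun X n hX => Set.mem_sInter.2 fun P hP => hP.2.2.1 X n (Set.mem_sInter.1 hX P hP),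
    fun X Y i r hir hY => Set.mem_sInter.2 fun P hP =>
      hP.2.2.2.1 X Y i r hir (Set.mem_sInter.1 hY P hP),
    fun Tr hTr => ⟨?_, ?_, ?_⟩⟩ <;>
  · intro h1 h2
    refine Set.mem_sInter.2 fun P hP => ?_
    have := hP.2.2.2.2 Tr hTr
    first
    | exact this.1 (Set.mem_sInter.1 h1 P hP) (Set.mem_sInter.1 h2 P hP)
    | exact this.2.1 (Set.mem_sInter.1 h1 P hP) (Set.mem_sInter.1 h2 P hP)
    | exact this.2.2 (Set.mem_sInter.1 h1 P hP) (Set.mem_sInter.1 h2 P hP)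

/-- if the Freyd functor `F : 𝓒 ⥤ 𝓟𝓑` is faithful then it reflects
isomorphisms: a map `f : X → Y` in `𝓒` is an isomorphism if and only if
`F(f) : F(X) → F(Y)` is an isomorphism of presheaves. -/
theorem freyd_reflects_isos_of_faithful
    (T : Type u) [Category.{v} T] [Preadditive T] [HasZeroObject T] [HasShift T ℤ]
    [∀ n : ℤ, (shiftFunctor T n).Additive] [Pretriangulated T] [IsTriangulated T]
    (Bs : Set T) (hBshift : ∀ X ∈ Bs, X⟦(1:ℤ)⟧ ∈ Bs ∧ X⟦(-1:ℤ)⟧ ∈ Bs)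
    (hFaithful : (freydT T Bs).Faithful)
    (X Y : CSub T Bs) (f : X ⟶ Y) :
    IsIso f ↔ IsIso ((freydT T Bs).map f) := by
  constructor
  · intro h
    infer_instance
  · intro h
    let f' : X.obj ⟶ Y.obj := f.hom
    -- bijectivity of postcomposition with f on Hom(B, -) for B ∈ Bs
    have hbij : ∀ (B : T), B ∈ Bs → Function.Bijective (fun x : B ⟶ X.obj => x ≫ f') := by
      intro B hB
      have h2 : IsIso ((AdditiveFunctor.forget _ _).map ((freydT T Bs).map f)) :=
        inferInstance
      have h3 : IsIso (((AdditiveFunctor.forget _ _).map ((freydT T Bs).map f)).app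
        (op (⟨B, hB⟩ : BSub T Bs))) := inferInstance
      have h4 := (CategoryTheory.ConcreteCategory.bijective_of_isIso
        (((AdditiveFunctor.forget _ _).map ((freydT T Bs).map f)).app
          (op (⟨B, hB⟩ : BSub T Bs))))
      have h5 : (fun x : B ⟶ X.obj => x ≫ f') = (fun y => y.hom) ∘
          (ConcreteCategory.hom (((AdditiveFunctor.forget _ _).map ((freydT T Bs).map f)).app
            (op (⟨B, hB⟩ : BSub T Bs)))) ∘ (fun x => ObjectProperty.homMk x) := rfl
      rw [h5]
      exact (InducedCategory.homEquiv).bijective.comp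
        (h4.comp (InducedCategory.homEquiv).symm.bijective)
    -- complete f to a distinguished triangle
    obtain ⟨Z, g, h3, hT⟩ := Pretriangulated.distinguished_cocone_triangle f' 
    have hZ : Z ∈ thickClosure T Bs :=
      ((thickClosure_isThickClosed T Bs).2.2.2 _ hT).1 X.2 Y.2
    -- every map from an object of Bs to Z is zero
    have hzero : ∀ (B : T), B ∈ Bs → ∀ u : B ⟶ Z, u = 0 := by
      intro B hB u
      -- first : u ≫ h3 = 0
      have e := shiftFunctorCompIsoId T (1 : ℤ) (-1 : ℤ) (by ring)
      have hinj := (hbij (B⟦(-1 : ℤ)⟧) (hBshift B hB).2).1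
      have h5 : ((u ≫ h3)⟦(-1 : ℤ)⟧' ≫ e.hom.app X.obj) ≫ f' = 0 := by
        have hnat := e.hom.naturality f'
        dsimp at hnat
        have hc : (u ≫ h3) ≫ f'⟦(1 : ℤ)⟧' = 0 := by
          rw [Category.assoc,
            show h3 ≫ f'⟦(1 : ℤ)⟧' = 0 from
              Pretriangulated.comp_distTriang_mor_zero₃₁ _ hT, comp_zero]
        rw [Category.assoc, ← hnat, ← Category.assoc, ← Functor.map_comp, hc,
          Functor.map_zero, zero_comp]
      have h6 : (u ≫ h3)⟦(-1 : ℤ)⟧' ≫ e.hom.app X.obj = 0 := by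
        have := hinj (a₁ := (u ≫ h3)⟦(-1 : ℤ)⟧' ≫ e.hom.app X.obj) (a₂ := 0)
        simp only [zero_comp] at this
        exact this h5
      have h7 : (u ≫ h3)⟦(-1 : ℤ)⟧' = 0 := by
        have : IsIso (e.hom.app X.obj) := inferInstance
        rw [← cancel_mono (e.hom.app X.obj), zero_comp, h6]
      have h8 : u ≫ h3 = 0 := by
        apply (shiftFunctor T (-1 : ℤ)).map_injective
        rw [h7, Functor.map_zero]
      -- factor u through g
      obtain ⟨w, hw⟩ := Pretriangulated.Triangle.coyoneda_exact₃ _ hT u h8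
      obtain ⟨v, hv⟩ := (hbij B hB).2 w
      dsimp at hw hv
      rw [hw, ← hv]
      show (v ≫ f') ≫ g = 0
      rw [Category.assoc,
        show f' ≫ g = 0 from Pretriangulated.comp_distTriang_mor_zero₁₂ _ hT, comp_zero]
    -- conclude 𝟙 Z = 0 by faithfulness
    set Z' : CSub T Bs := ⟨Z, hZ⟩ with hZ'
    have hid : (𝟙 Z' : Z' ⟶ Z') = 0 := by
      apply hFaithful.map_injective
      apply ObjectProperty.hom_ext
      apply NatTrans.ext
      funext B
      ext u
      have h0 : u = 0 := InducedCategory.hom_ext (by rw [hzero _ B.unop.2 u.hom]; rfl)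
      show u ≫ (𝟙 Z' : Z' ⟶ Z') = u ≫ (0 : Z' ⟶ Z')
      rw [h0]
      exact InducedCategory.hom_ext
        (show (0 : B.unop.obj ⟶ Z) ≫ 𝟙 Z = (0 : B.unop.obj ⟶ Z) ≫ (0 : Z ⟶ Z) by simp)
    have hZzero : Limits.IsZero Z := (Limits.IsZero.iff_id_eq_zero Z).2 (congrArg (·.hom) hid)
    have : IsIso f' :=
      (Pretriangulated.Triangle.isZero₃_iff_isIso₁ _ hT).1 hZzero
    exact ⟨ObjectProperty.homMk (inv f' : Y.obj ⟶ X.obj), InducedCategory.hom_ext (IsIso.hom_inv_id f'),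
      InducedCategory.hom_ext (IsIso.inv_hom_id f')⟩
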